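/- Let s be a sign assignment on a finite ranked squared poset P, and let F be a functor from P (viewed as a category) to the category of R-modules. Define the cochain groups C^n = ⊕_{ℓ(x)=n} F(x) and the map d^n given on the summand F(x) by the sum over covering relations x ⋖ x' of (-1)^{s(x,x')} F(x ⋖ x'). Then d^{n+1} ∘ d^n = 0. -/

import Mathlib

open Finset

private lemma neg_one_pow_succ_val {R : Type*} [CommRing R] (u : ZMod 2) :
    ((-1 : R) ^ (u + 1).val) = -((-1 : R) ^ u.val) := by
  fin_cases u
  · change (-1 : R) ^ (1 : ℕ) = -((-1 : R) ^ (0 : ℕ))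
    simp
  · change (-1 : R) ^ (0 : ℕ) = -((-1 : R) ^ (1 : ℕ))
    simp

/-- For a finite ranked squared poset `P` with a sign assignment `s`, and a
functor `F` from `P` to `R`-modules, the differential of poset homology squares
to zero.  This is the componentwise formulation: for every pair `x, z`, the sum
over all intermediate `y` (with `x ⋖ y ⋖ z`) of the signed composites
`(-1)^{s(x,y)+s(y,z)} F(y ⋖ z) ∘ F(x ⋖ y)` vanishes; equivalently,
`d^{n+1} ∘ d^n = 0` on the cochain groups `C^n = ⊕_{ℓ(x)=n} F(x)`. -/
theorem poset_homology_d_squared_zero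
    {P : Type*} [Fintype P] [PartialOrder P]
    [∀ a b : P, Decidable (a ⋖ b)]
    (ℓ : P → ℕ)
    (hrank : ∀ a b : P, a ⋖ b → ℓ b = ℓ a + 1)
    (hsquared : ∀ x y z : P, x ⋖ y → y ⋖ z →
      ∃! y' : P, y' ≠ y ∧ x ⋖ y' ∧ y' ⋖ z)
    (s : P → P → ZMod 2)
    (hsign : ∀ x y y' z : P, x ⋖ y → y ⋖ z → x ⋖ y' → y' ⋖ z → y ≠ y' →
      s x y + s y z = s x y' + s y' z + 1)
    {R : Type*} [CommRing R]
    (M : P → Type*) [∀ x, AddCommGroup (M x)] [∀ x, Module R (M x)]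
    (F : ∀ x y : P, x ≤ y → (M x →ₗ[R] M y))
    (hid : ∀ x, F x x le_rfl = LinearMap.id)
    (hcomp : ∀ (x y z : P) (h1 : x ≤ y) (h2 : y ≤ z),
      (F y z h2).comp (F x y h1) = F x z (h1.trans h2)) :
    ∀ x z : P,
      (∑ y : P, if h : x ⋖ y ∧ y ⋖ z then
          ((-1 : R) ^ (s x y + s y z).val) • ((F y z h.2.le).comp (F x y h.1.le))
        else 0) = 0 := by
  intro x z
  set f : P → (M x →ₗ[R] M z) := fun y => if h : x ⋖ y ∧ y ⋖ z then
      ((-1 : R) ^ (s x y + s y z).val) • ((F y z h.2.le).comp (F x y h.1.le))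
    else 0 with hf
  set g : P → P := fun y => if h : x ⋖ y ∧ y ⋖ z then
      (hsquared x y z h.1 h.2).choose else y with hg
  have hgdef : ∀ y (h : x ⋖ y ∧ y ⋖ z), g y = (hsquared x y z h.1 h.2).choose := by
    intro y h; simp only [hg, dif_pos h]
  have hgspec : ∀ y (h : x ⋖ y ∧ y ⋖ z),
      g y ≠ y ∧ x ⋖ g y ∧ g y ⋖ z := by
    intro y h
    rw [hgdef y h]
    exact (hsquared x y z h.1 h.2).choose_spec.1
  have hginv : ∀ y, g (g y) = y := by
    intro y
    by_cases h : x ⋖ y ∧ y ⋖ z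
    · obtain ⟨hne, h1, h2⟩ := hgspec y h
      rw [hgdef (g y) ⟨h1, h2⟩]
      exact ((hsquared x (g y) z h1 h2).choose_spec.2 y
        ⟨fun e => hne e.symm, h.1, h.2⟩).symm
    · simp [hg, h]
  apply Finset.sum_ninvolution g
  · intro y
    by_cases h : x ⋖ y ∧ y ⋖ z
    · obtain ⟨hne, h1, h2⟩ := hgspec y h
      have key : s x (g y) + s (g y) z = s x y + s y z + 1 :=
        hsign x (g y) y z h1 h2 h.1 h.2 hne
      have hcompeq : (F (g y) z h2.le).comp (F x (g y) h1.le)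
          = (F y z h.2.le).comp (F x y h.1.le) := by
        rw [hcomp, hcomp]
      simp only [hf, dif_pos h, dif_pos (⟨h1, h2⟩ : x ⋖ g y ∧ g y ⋖ z)]
      rw [key, hcompeq, neg_one_pow_succ_val, neg_smul, add_neg_cancel]
    · have hgy : g y = y := by simp [hg, h]
      simp [hf, h, hgy]
  · intro y hy
    by_cases h : x ⋖ y ∧ y ⋖ z
    · exact (hgspec y h).1
    · simp [hf, h] at hy
  · intro y; exact Finset.mem_univ _
  · exact hginv
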